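/- Let W, C, Cstar, F, gmin, g, h, hstar be real numbers such that W ≥ 1, C ≥ 0, Cstar > 0, 0 ≤ gmin ≤ g, 0 ≤ h, h ≤ hstar, Cstar = g + hstar, F ≤ g + W·h, and F + (W − 1)·gmin > 0. Then C / Cstar ≤ (C·W) / (F + (W − 1)·gmin). -/

import Mathlib

theorem wastar_F_bound_valid (W C Cstar F gmin g h hstar : ℝ)
    (hW : W ≥ 1) (hC : C ≥ 0) (hCstar : Cstar > 0)
    (hgmin0 : 0 ≤ gmin) (hgming : gmin ≤ g)
    (hh : 0 ≤ h) (hadm : h ≤ hstar)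
    (hCstareq : Cstar = g + hstar)
    (hF : F ≤ g + W * h)
    (hpos : F + (W - 1) * gmin > 0) :
    C / Cstar ≤ (C * W) / (F + (W - 1) * gmin) := by
  have hden : F + (W - 1) * gmin ≤ W * Cstar := by nlinarith
  have h1 : C / Cstar = C * W / (W * Cstar) := by
    field_simp
  rw [h1]
  exact div_le_div_of_nonneg_left (by positivity) hpos hden
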